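/- arXiv:1603.07199 — 10 statements merged into one kernel-verified Lean document; each statement's English description precedes it below -/
import Mathlib

section
/- In a positively ordered abelian monoid W, if there exists no additive order-preserving map f : W → [0,∞] with f(y) = 1 (no state normalized at y), then some multiple ny of y is properly infinite, i.e., 2(ny) ≤ ny for some n ≥ 1. -/
open scoped ENNReal

/-- Compact containment (way-below) relation: `a ≪ b` iff for every monotone sequence
with a supremum dominating `b`, some term dominates `a`. -/
def CuWayBelow {S : Type*} [Preorder S] (a b : S) : Prop :=
  ∀ c : ℕ → S, Monotone c → ∀ s : S, IsLUB (Set.range c) s → b ≤ s → ∃ n, a ≤ c n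

/-- The axioms (O1)-(O4) of the category Cu, together with positivity of the order. -/
structure CuSemigroup (S : Type*) [AddCommMonoid S] [PartialOrder S] [IsOrderedAddMonoid S] : Prop where
  pos : ∀ x : S, 0 ≤ x
  O1 : ∀ c : ℕ → S, Monotone c → ∃ s : S, IsLUB (Set.range c) s
  O2 : ∀ a : S, ∃ c : ℕ → S, (∀ n, CuWayBelow (c n) (c (n + 1))) ∧ IsLUB (Set.range c) a
  O3 : ∀ a' a b' b : S, CuWayBelow a' a → CuWayBelow b' b → CuWayBelow (a' + b') (a + b)
  O4 : ∀ c d : ℕ → S, Monotone c → Monotone d → ∀ s t : S,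
      IsLUB (Set.range c) s → IsLUB (Set.range d) t →
      IsLUB (Set.range fun n => c n + d n) (s + t)

/-- Simplicity: every nonzero element is full. -/
def CuSimple (S : Type*) [AddCommMonoid S] [PartialOrder S] [IsOrderedAddMonoid S] : Prop :=
  ∀ x y : S, x ≠ 0 → y ≠ 0 → ∀ y' : S, CuWayBelow y' y → ∃ n : ℕ, y' ≤ n • x

/-- A full sequence: increasing and absorbing every compactly contained element. -/
def CuFullSeq {S : Type*} [AddCommMonoid S] [PartialOrder S] [IsOrderedAddMonoid S] (x : ℕ → S) : Prop :=
  Monotone x ∧ ∀ z' z : S, CuWayBelow z' z → ∃ n m : ℕ, z' ≤ m • x n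

/-- The value `β(x,y) = inf { l/k : k ≥ 1, k•x ≤ l•y }`. -/
noncomputable def beta {W : Type*} [AddCommMonoid W] [PartialOrder W] [IsOrderedAddMonoid W] (x y : W) : ℝ :=
  sInf {r : ℝ | ∃ k l : ℕ, 0 < k ∧ k • x ≤ l • y ∧ r = (l : ℝ) / (k : ℝ)}

/-- ω-comparison. -/
def OmegaComparison (S : Type*) [AddCommMonoid S] [PartialOrder S] [IsOrderedAddMonoid S] : Prop :=
  ∀ (x' x : S) (y : ℕ → S), CuWayBelow x' x →
    (∀ j : ℕ, ∃ k : ℕ, 1 ≤ k ∧ (k + 1) • x ≤ k • y j) →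
    ∃ n : ℕ, x' ≤ ∑ j ∈ Finset.range n, y j

/-- β-comparison. -/
def BetaComparison (S : Type*) [AddCommMonoid S] [PartialOrder S] [IsOrderedAddMonoid S] : Prop :=
  ∀ x y : S, (∃ n : ℕ, x ≤ n • y) → beta x y = 0 → x ≤ y


section AuxE
variable {W : Type*} [AddCommMonoid W] [PartialOrder W] [IsOrderedAddMonoid W]


lemma E_of_noPI (hpos : ∀ x : W, 0 ≤ x) (y : W)
    (hno : ∀ n : ℕ, 1 ≤ n → ¬ 2 • (n • y) ≤ n • y) :
    ∀ m n : ℕ, m • y ≤ n • y → m ≤ n := by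
  intro m n hmn
  by_contra hlt
  push_neg at hlt
  rcases Nat.eq_zero_or_pos n with hn | hn
  · subst hn
    have h1m : 1 ≤ m := hlt
    have hy0 : y ≤ 0 := by
      have := nsmul_le_nsmul_left (hpos y) h1m
      simpa using this.trans (by simpa using hmn)
    exact hno 1 le_rfl (by
      simp only [one_nsmul, two_nsmul]
      calc y + y ≤ 0 + 0 := add_le_add hy0 hy0
      _ = 0 := by simp
      _ ≤ y := hpos y)
  · set d := m - n with hd
    have hd1 : 1 ≤ d := by omega
    have hm : m = n + d := by omega
    have hmd : n • y + d • y ≤ n • y := by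
      rw [← add_nsmul, ← hm]; exact hmn
    have key : ∀ j : ℕ, n • y + (j * d) • y ≤ n • y := by
      intro j
      induction j with
      | zero => simp
      | succ j ih =>
        calc n • y + ((j + 1) * d) • y = (n • y + d • y) + (j * d) • y := by
              rw [add_mul, one_mul, add_nsmul]; abel
        _ ≤ n • y + (j * d) • y := add_le_add_left hmd _
        _ ≤ n • y := ih
    have hnd : n • y ≤ (n * d) • y :=
      nsmul_le_nsmul_left (hpos y) (Nat.le_mul_of_pos_right n hd1)
    exact hno n hn (by
      calc 2 • (n • y) = n • y + n • y := two_nsmul _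
      _ ≤ n • y + (n * d) • y := add_le_add_right hnd _
      _ ≤ n • y := key n)


end AuxE

namespace PIState

section Mean
open Pointwise
variable {H : Type*} [AddCommMonoid H]

variable (H) in
def BddFun : Submodule ℝ (H → ℝ) where
  carrier := {φ | ∃ C : ℝ, ∀ h : H, |φ h| ≤ C}
  zero_mem' := ⟨0, by simp⟩
  add_mem' := by
    rintro φ ψ ⟨C, hC⟩ ⟨D, hD⟩
    exact ⟨C + D, fun h => (abs_add_le _ _).trans (add_le_add (hC h) (hD h))⟩
  smul_mem' := by
    rintro c φ ⟨C, hC⟩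
    refine ⟨|c| * C, fun h => ?_⟩
    rw [Pi.smul_apply, smul_eq_mul, abs_mul]
    exact mul_le_mul_of_nonneg_left (hC h) (abs_nonneg c)

noncomputable def supAvg (φ : H → ℝ) (k : ℕ) (hs : Fin k → H) : ℝ :=
  ⨆ h : H, (∑ i, φ (h + hs i)) / k

def avgSet (φ : H → ℝ) : Set ℝ :=
  {r | ∃ (k : ℕ) (hs : Fin k → H), 0 < k ∧ r = supAvg φ k hs}

noncomputable def Nf (φ : H → ℝ) : ℝ := sInf (avgSet φ)

variable {φ ψ : H → ℝ} {c C : ℝ}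

lemma avg_bddAbove (hub : ∀ h, φ h ≤ c) {k : ℕ} (hk : 0 < k) (hs : Fin k → H) :
    BddAbove (Set.range fun h : H => (∑ i, φ (h + hs i)) / k) := by
  refine ⟨c, ?_⟩
  rintro r ⟨h, rfl⟩
  have hk0 : (0:ℝ) < k := by exact_mod_cast hk
  rw [div_le_iff₀ hk0]
  calc (∑ i, φ (h + hs i)) ≤ ∑ _i : Fin k, c := Finset.sum_le_sum (fun i _ => hub _)
    _ = c * k := by simp [Finset.sum_const, mul_comm]

lemma supAvg_le (hub : ∀ h, φ h ≤ c) {k : ℕ} (hk : 0 < k) (hs : Fin k → H) :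
    supAvg φ k hs ≤ c := by
  haveI : Nonempty H := ⟨0⟩
  apply ciSup_le
  intro h
  have hk0 : (0:ℝ) < k := by exact_mod_cast hk
  rw [div_le_iff₀ hk0]
  calc (∑ i, φ (h + hs i)) ≤ ∑ _i : Fin k, c := Finset.sum_le_sum (fun i _ => hub _)
    _ = c * k := by simp [Finset.sum_const, mul_comm]

lemma lb_le_supAvg (hub : ∀ h, φ h ≤ c) (hlb : ∀ h, C ≤ φ h) {k : ℕ} (hk : 0 < k)
    (hs : Fin k → H) : C ≤ supAvg φ k hs := by
  have h0 : (∑ i, φ ((0 : H) + hs i)) / k ≤ supAvg φ k hs :=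
    le_ciSup (avg_bddAbove hub hk hs) 0
  refine le_trans ?_ h0
  have hk0 : (0:ℝ) < k := by exact_mod_cast hk
  rw [le_div_iff₀ hk0]
  calc C * k = ∑ _i : Fin k, C := by simp [Finset.sum_const, mul_comm]
    _ ≤ ∑ i, φ ((0 : H) + hs i) := Finset.sum_le_sum (fun i _ => hlb _)

lemma avgSet_nonempty : (avgSet φ).Nonempty :=
  ⟨supAvg φ 1 (fun _ => 0), 1, fun _ => 0, one_pos, rfl⟩

lemma avgSet_bddBelow (hub : ∀ h, φ h ≤ c) (hlb : ∀ h, C ≤ φ h) : BddBelow (avgSet φ) := by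
  refine ⟨C, ?_⟩
  rintro r ⟨k, hs, hk, rfl⟩
  exact lb_le_supAvg hub hlb hk hs

lemma Nf_le_of_ub (hub : ∀ h, φ h ≤ c) (hlb : ∀ h, C ≤ φ h) : Nf φ ≤ c := by
  have hmem : supAvg φ 1 (fun _ => 0) ∈ avgSet φ := ⟨1, fun _ => 0, one_pos, rfl⟩
  exact (csInf_le (avgSet_bddBelow hub hlb) hmem).trans (supAvg_le hub one_pos _)

lemma lb_le_Nf (hub : ∀ h, φ h ≤ c) (hlb : ∀ h, C ≤ φ h) : C ≤ Nf φ :=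
  le_csInf avgSet_nonempty (by rintro r ⟨k, hs, hk, rfl⟩; exact lb_le_supAvg hub hlb hk hs)

lemma supAvg_combine (hubφ : ∀ h, φ h ≤ c) (hubψ : ∀ h, ψ h ≤ C)
    {k l : ℕ} (hk : 0 < k) (hl : 0 < l) (hs : Fin k → H) (gs : Fin l → H) :
    supAvg (φ + ψ) (k * l)
      (fun i => hs (finProdFinEquiv.symm i).1 + gs (finProdFinEquiv.symm i).2) ≤
      supAvg φ k hs + supAvg ψ l gs := by
  haveI : Nonempty H := ⟨0⟩
  apply ciSup_le
  intro h
  have hk0 : (0:ℝ) < k := by exact_mod_cast hk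
  have hl0 : (0:ℝ) < l := by exact_mod_cast hl
  have hkl0 : (0:ℝ) < (k * l : ℕ) := by positivity
  rw [div_le_iff₀ hkl0]
  have hsum : (∑ i : Fin (k * l), (φ + ψ)
      (h + (hs (finProdFinEquiv.symm i).1 + gs (finProdFinEquiv.symm i).2))) =
      ∑ p : Fin k × Fin l, (φ + ψ) (h + (hs p.1 + gs p.2)) := by
    rw [← Equiv.sum_comp (finProdFinEquiv : Fin k × Fin l ≃ Fin (k * l))
      (fun i => (φ + ψ) (h + (hs (finProdFinEquiv.symm i).1 + gs (finProdFinEquiv.symm i).2)))]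
    simp
  rw [hsum]
  have hA : (∑ p : Fin k × Fin l, φ (h + (hs p.1 + gs p.2))) ≤ l * (k * supAvg φ k hs) := by
    have : (∑ p : Fin k × Fin l, φ (h + (hs p.1 + gs p.2))) =
        ∑ j : Fin l, ∑ i : Fin k, φ ((h + gs j) + hs i) := by
      rw [Fintype.sum_prod_type]
      rw [Finset.sum_comm]
      congr 1; ext j; congr 1; ext i; congr 1; abel
    rw [this]
    have hinner : ∀ j : Fin l, (∑ i : Fin k, φ ((h + gs j) + hs i)) ≤ supAvg φ k hs * k := by
      intro j
      have h2 := le_ciSup (avg_bddAbove hubφ hk hs) (h + gs j)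
      rw [div_le_iff₀ hk0] at h2
      exact h2
    calc (∑ j : Fin l, ∑ i : Fin k, φ ((h + gs j) + hs i)) ≤
        ∑ _j : Fin l, (supAvg φ k hs * k) := Finset.sum_le_sum (fun j _ => hinner j)
      _ = l * (k * supAvg φ k hs) := by
          rw [Finset.sum_const, Finset.card_univ, Fintype.card_fin, nsmul_eq_mul]; ring
  have hB : (∑ p : Fin k × Fin l, ψ (h + (hs p.1 + gs p.2))) ≤ k * (l * supAvg ψ l gs) := by
    have : (∑ p : Fin k × Fin l, ψ (h + (hs p.1 + gs p.2))) =
        ∑ i : Fin k, ∑ j : Fin l, ψ ((h + hs i) + gs j) := by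
      rw [Fintype.sum_prod_type]
      congr 1; ext i; congr 1; ext j; congr 1; abel
    rw [this]
    have hinner : ∀ i : Fin k, (∑ j : Fin l, ψ ((h + hs i) + gs j)) ≤ supAvg ψ l gs * l := by
      intro i
      have h2 := le_ciSup (avg_bddAbove hubψ hl gs) (h + hs i)
      rw [div_le_iff₀ hl0] at h2
      exact h2
    calc (∑ i : Fin k, ∑ j : Fin l, ψ ((h + hs i) + gs j)) ≤
        ∑ _i : Fin k, (supAvg ψ l gs * l) := Finset.sum_le_sum (fun i _ => hinner i)
      _ = k * (l * supAvg ψ l gs) := by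
          rw [Finset.sum_const, Finset.card_univ, Fintype.card_fin, nsmul_eq_mul]; ring
  have hsplit : (∑ p : Fin k × Fin l, (φ + ψ) (h + (hs p.1 + gs p.2))) =
      (∑ p : Fin k × Fin l, φ (h + (hs p.1 + gs p.2))) +
      (∑ p : Fin k × Fin l, ψ (h + (hs p.1 + gs p.2))) := by
    rw [← Finset.sum_add_distrib]; rfl
  rw [hsplit]
  push_cast
  nlinarith [hA, hB]

lemma Nf_add {cφ Cφ cψ Cψ : ℝ} (hubφ : ∀ h, φ h ≤ cφ) (hlbφ : ∀ h, Cφ ≤ φ h)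
    (hubψ : ∀ h, ψ h ≤ cψ) (hlbψ : ∀ h, Cψ ≤ ψ h) :
    Nf (φ + ψ) ≤ Nf φ + Nf ψ := by
  have hubs : ∀ h, (φ + ψ) h ≤ cφ + cψ := fun h => add_le_add (hubφ h) (hubψ h)
  have hlbs : ∀ h, Cφ + Cψ ≤ (φ + ψ) h := fun h => add_le_add (hlbφ h) (hlbψ h)
  have key : ∀ r ∈ avgSet φ, ∀ s ∈ avgSet ψ, Nf (φ + ψ) ≤ r + s := by
    rintro r ⟨k, hs, hk, rfl⟩ s ⟨l, gs, hl, rfl⟩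
    have hmem : supAvg (φ + ψ) (k * l)
        (fun i => hs (finProdFinEquiv.symm i).1 + gs (finProdFinEquiv.symm i).2) ∈
        avgSet (φ + ψ) := ⟨k * l, _, Nat.mul_pos hk hl, rfl⟩
    exact (csInf_le (avgSet_bddBelow hubs hlbs) hmem).trans
      (supAvg_combine hubφ hubψ hk hl hs gs)
  have step1 : ∀ s ∈ avgSet ψ, Nf (φ + ψ) - s ≤ Nf φ := fun s hs =>
    le_csInf avgSet_nonempty (fun r hr => sub_le_iff_le_add.2 (key r hr s hs))
  have step2 : Nf (φ + ψ) - Nf φ ≤ Nf ψ := by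
    apply le_csInf avgSet_nonempty
    intro s hs
    have := step1 s hs
    linarith
  linarith

lemma Nf_smul (hc : 0 < c) (hub : ∀ h, φ h ≤ C) :
    Nf (c • φ) = c * Nf φ := by
  have hsa : ∀ (k : ℕ) (hs : Fin k → H), supAvg (c • φ) k hs = c * supAvg φ k hs := by
    intro k hs
    unfold supAvg
    rw [Real.mul_iSup_of_nonneg hc.le]
    congr 1; ext h
    simp only [Pi.smul_apply, smul_eq_mul]
    rw [← Finset.mul_sum, mul_div_assoc]
  have hset : avgSet (c • φ) = c • avgSet φ := by
    ext r
    constructor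
    · rintro ⟨k, hs, hk, rfl⟩
      exact ⟨supAvg φ k hs, ⟨k, hs, hk, rfl⟩, (hsa k hs).symm⟩
    · rintro ⟨s, ⟨k, hs, hk, rfl⟩, rfl⟩
      exact ⟨k, hs, hk, (hsa k hs).symm⟩
  rw [Nf, hset, Real.sInf_smul_of_nonneg hc.le]
  rfl

lemma Nf_translate (t : H) (hb : ∀ h, |φ h| ≤ C) :
    Nf (fun h => φ (h + t) - φ h) ≤ 0 := by
  haveI : Nonempty H := ⟨0⟩
  have hC0 : 0 ≤ C := (abs_nonneg _).trans (hb 0)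
  have hubξ : ∀ h : H, (fun h => φ (h + t) - φ h) h ≤ 2 * C := fun h => by
    dsimp only
    have h1 := abs_le.1 (hb (h + t))
    have h2 := abs_le.1 (hb h)
    linarith [h1.2, h2.1]
  have hlbξ : ∀ h : H, -(2 * C) ≤ (fun h => φ (h + t) - φ h) h := fun h => by
    dsimp only
    have h1 := abs_le.1 (hb (h + t))
    have h2 := abs_le.1 (hb h)
    linarith [h1.1, h2.2]
  have key : ∀ k : ℕ, 0 < k → Nf (fun h => φ (h + t) - φ h) ≤ 2 * C / k := by
    intro k hk
    have hk0 : (0:ℝ) < k := by exact_mod_cast hk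
    have hmem : supAvg (fun h => φ (h + t) - φ h) k (fun i => ((i : ℕ) + 1) • t) ∈
        avgSet (fun h => φ (h + t) - φ h) := ⟨k, _, hk, rfl⟩
    refine (csInf_le (avgSet_bddBelow hubξ hlbξ) hmem).trans ?_
    apply ciSup_le
    intro h
    have hstep : (∑ i : Fin k, (fun h => φ (h + t) - φ h) (h + ((i : ℕ) + 1) • t)) =
        ∑ j ∈ Finset.range k, (φ (h + (j + 1 + 1) • t) - φ (h + (j + 1) • t)) := by
      rw [Fin.sum_univ_eq_sum_range (fun j => (fun h => φ (h + t) - φ h) (h + (j + 1) • t)) k]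
      refine Finset.sum_congr rfl (fun j _ => ?_)
      dsimp only
      have harg : h + (j + 1) • t + t = h + (j + 1 + 1) • t := by
        rw [add_assoc, ← succ_nsmul]
      rw [harg]
    have htel : (∑ j ∈ Finset.range k, (φ (h + (j + 1 + 1) • t) - φ (h + (j + 1) • t))) =
        φ (h + (k + 1) • t) - φ (h + (0 + 1) • t) :=
      Finset.sum_range_sub (fun j => φ (h + (j + 1) • t)) k
    have hbound : (∑ i : Fin k, (fun h => φ (h + t) - φ h) (h + ((i : ℕ) + 1) • t)) ≤ 2 * C := by
      rw [hstep, htel]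
      have h1 := abs_le.1 (hb (h + (k + 1) • t))
      have h2 := abs_le.1 (hb (h + (0 + 1) • t))
      linarith [h1.2, h2.1]
    rw [div_le_div_iff₀ hk0 hk0]
    nlinarith [hbound, hk0]
  by_contra hcon
  push_neg at hcon
  obtain ⟨k, hkgt⟩ := exists_nat_gt (2 * C / Nf (fun h => φ (h + t) - φ h))
  have hdiv0 : (0:ℝ) ≤ 2 * C / Nf (fun h => φ (h + t) - φ h) := by positivity
  have hkR : (0:ℝ) < k := lt_of_le_of_lt hdiv0 hkgt
  have hk : 0 < k := by exact_mod_cast hkR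
  have h1 := key k hk
  have h2 : 2 * C / (k : ℝ) < Nf (fun h => φ (h + t) - φ h) := by
    rw [div_lt_iff₀ hkR]
    have h3 := (div_lt_iff₀ hcon).1 hkgt
    linarith
  linarith


lemma exists_invariant_mean :
    ∃ L : ↥(BddFun H) →ₗ[ℝ] ℝ,
      (∀ (ψ : ↥(BddFun H)) (c : ℝ), (∀ h, (ψ : H → ℝ) h ≤ c) → L ψ ≤ c) ∧
      (∀ (ψ : ↥(BddFun H)) (c : ℝ), (∀ h, c ≤ (ψ : H → ℝ) h) → c ≤ L ψ) ∧
      (∀ (ψ ψ' : ↥(BddFun H)) (t : H), (∀ h, (ψ' : H → ℝ) h = (ψ : H → ℝ) (h + t)) →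
        L ψ' = L ψ) := by
  have hbounds : ∀ ψ : ↥(BddFun H), ∃ C : ℝ, ∀ h, |(ψ : H → ℝ) h| ≤ C := fun ψ => ψ.2
  obtain ⟨L, -, hL⟩ := exists_extension_of_le_sublinear
      (⟨⊥, 0⟩ : (↥(BddFun H)) →ₗ.[ℝ] ℝ) (fun ψ => Nf (ψ : H → ℝ))
      (fun c hc x => by
        obtain ⟨C, hC⟩ := hbounds x
        exact Nf_smul (φ := (x : H → ℝ)) (C := C) hc (fun h => (abs_le.1 (hC h)).2))
      (fun x z => by
        obtain ⟨C, hC⟩ := hbounds x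
        obtain ⟨D, hD⟩ := hbounds z
        exact Nf_add (fun h => (abs_le.1 (hC h)).2) (fun h => (abs_le.1 (hC h)).1)
          (fun h => (abs_le.1 (hD h)).2) (fun h => (abs_le.1 (hD h)).1))
      (fun x => by
        have hx0 : (↑x : ↥(BddFun H)) = 0 := (Submodule.mem_bot ℝ).1 x.2
        have h1 : (⟨⊥, 0⟩ : (↥(BddFun H)) →ₗ.[ℝ] ℝ) x = 0 := rfl
        rw [h1, hx0]
        exact lb_le_Nf (φ := ((0 : ↥(BddFun H)) : H → ℝ)) (c := 0) (C := 0)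
          (fun h => le_rfl) (fun h => le_rfl))
  have hub : ∀ (ψ : ↥(BddFun H)) (c : ℝ), (∀ h, (ψ : H → ℝ) h ≤ c) → L ψ ≤ c := by
    intro ψ c hc
    obtain ⟨C, hC⟩ := hbounds ψ
    exact (hL ψ).trans (Nf_le_of_ub hc (fun h => (abs_le.1 (hC h)).1))
  have hlb : ∀ (ψ : ↥(BddFun H)) (c : ℝ), (∀ h, c ≤ (ψ : H → ℝ) h) → c ≤ L ψ := by
    intro ψ c hc
    obtain ⟨C, hC⟩ := hbounds ψ
    have hneg : L (-ψ) ≤ -c := by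
      have hcoe : ((-ψ : ↥(BddFun H)) : H → ℝ) = -(ψ : H → ℝ) := rfl
      have := (hL (-ψ)).trans
        (Nf_le_of_ub (φ := ((-ψ : ↥(BddFun H)) : H → ℝ)) (c := -c) (C := -C)
          (fun h => by rw [hcoe]; simpa using hc h)
          (fun h => by rw [hcoe]; simpa using (abs_le.1 (hC h)).2))
      exact this
    rw [map_neg] at hneg
    linarith
  refine ⟨L, hub, hlb, ?_⟩
  intro ψ ψ' t hψ'
  obtain ⟨C, hC⟩ := hbounds ψ
  have hd : L (ψ' - ψ) ≤ 0 := by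
    have hcoe : ((ψ' - ψ : ↥(BddFun H)) : H → ℝ) =
        fun h => (ψ : H → ℝ) (h + t) - (ψ : H → ℝ) h := by
      funext h
      show (ψ' : H → ℝ) h - (ψ : H → ℝ) h = (ψ : H → ℝ) (h + t) - (ψ : H → ℝ) h
      rw [hψ' h]
    refine (hL (ψ' - ψ)).trans ?_
    rw [hcoe]
    exact Nf_translate t hC
  have he : L (ψ - ψ') ≤ 0 := by
    have hcoe : ((ψ - ψ' : ↥(BddFun H)) : H → ℝ) =
        fun h => (-(ψ : H → ℝ)) (h + t) - (-(ψ : H → ℝ)) h := by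
      funext h
      show (ψ : H → ℝ) h - (ψ' : H → ℝ) h = -((ψ : H → ℝ) (h + t)) - -((ψ : H → ℝ) h)
      rw [hψ' h]; ring
    refine (hL (ψ - ψ')).trans ?_
    rw [hcoe]
    exact Nf_translate t (fun h => by simpa using hC h)
  rw [map_sub] at hd he
  linarith

end Mean


variable {W : Type*} [AddCommMonoid W] [PartialOrder W] [IsOrderedAddMonoid W]

variable (y : W)

def Sfin : AddSubmonoid W where
  carrier := {x : W | ∃ n k : ℕ, 1 ≤ k ∧ k • x ≤ n • y}
  zero_mem' := ⟨0, 1, le_rfl, by simp⟩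
  add_mem' := by
    rintro a b ⟨n, k, hk, hab⟩ ⟨n', k', hk', hab'⟩
    refine ⟨n * k' + n' * k, k * k', Nat.one_le_iff_ne_zero.2 (by positivity), ?_⟩
    calc (k * k') • (a + b) = (k * k') • a + (k * k') • b := nsmul_add _ _ _
      _ = k' • (k • a) + k • (k' • b) := by
          rw [mul_nsmul, mul_comm k k', mul_nsmul]
      _ ≤ k' • (n • y) + k • (n' • y) :=
          add_le_add (nsmul_le_nsmul_right hab _) (nsmul_le_nsmul_right hab' _)
      _ = (n * k') • y + (n' * k) • y := by rw [mul_nsmul, mul_nsmul]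
      _ = (n * k' + n' * k) • y := (add_nsmul _ _ _).symm

lemma mem_Sfin_of_le {x x' : W} (hx' : x' ∈ Sfin y) (h : x ≤ x') : x ∈ Sfin y := by
  obtain ⟨n, k, hk, hb⟩ := hx'
  exact ⟨n, k, hk, (nsmul_le_nsmul_right h k).trans hb⟩

lemma y_mem_Sfin : y ∈ Sfin y := ⟨1, 1, le_rfl, le_rfl⟩

def Pset (x : W) : Set ℝ := {r | ∃ n k : ℕ, 1 ≤ k ∧ k • x ≤ n • y ∧ r = (n : ℝ) / k}

def Qset (x : W) : Set ℝ := {r | ∃ n k : ℕ, 1 ≤ k ∧ n • y ≤ k • x ∧ r = (n : ℝ) / k}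

noncomputable def pf (x : W) : ℝ := sInf (Pset y x)

noncomputable def qf (x : W) : ℝ := sSup (Qset y x)

variable {y}

lemma Pset_nonneg {x : W} : ∀ r ∈ Pset y x, (0 : ℝ) ≤ r := by
  rintro r ⟨n, k, hk, _, rfl⟩; positivity

lemma Pset_nonempty {x : W} (hx : x ∈ Sfin y) : (Pset y x).Nonempty := by
  obtain ⟨n, k, hk, hb⟩ := hx; exact ⟨_, n, k, hk, hb, rfl⟩

lemma Pset_bddBelow {x : W} : BddBelow (Pset y x) := ⟨0, fun r hr => Pset_nonneg r hr⟩

lemma Qset_nonempty (hpos : ∀ x : W, 0 ≤ x) (x : W) : (Qset y x).Nonempty :=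
  ⟨0, 0, 1, le_rfl, by simpa using hpos x, by simp⟩

-- the key comparison, using E
lemma Qset_le_Pset (hE : ∀ m n : ℕ, m • y ≤ n • y → m ≤ n) {x : W} :
    ∀ r ∈ Qset y x, ∀ s ∈ Pset y x, r ≤ s := by
  rintro r ⟨n, k, hk, hq, rfl⟩ s ⟨n', k', hk', hp, rfl⟩
  have h1 : (n * k') • y ≤ (n' * k) • y := by
    calc (n * k') • y = k' • (n • y) := mul_nsmul _ _ _
      _ ≤ k' • (k • x) := nsmul_le_nsmul_right hq _
      _ = (k * k') • x := (mul_nsmul _ _ _).symm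
      _ = k • (k' • x) := by rw [mul_comm]; exact mul_nsmul _ _ _
      _ ≤ k • (n' • y) := nsmul_le_nsmul_right hp _
      _ = (n' * k) • y := (mul_nsmul _ _ _).symm
  have h2 : n * k' ≤ n' * k := hE _ _ h1
  have hk0 : (0:ℝ) < k := by exact_mod_cast hk
  have hk'0 : (0:ℝ) < k' := by exact_mod_cast hk'
  rw [div_le_div_iff₀ hk0 hk'0]
  exact_mod_cast h2

lemma Qset_bddAbove (hE : ∀ m n : ℕ, m • y ≤ n • y → m ≤ n) {x : W} (hx : x ∈ Sfin y) :
    BddAbove (Qset y x) := by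
  obtain ⟨s, hs⟩ := Pset_nonempty hx
  exact ⟨s, fun r hr => Qset_le_Pset hE r hr s hs⟩

lemma qf_le_pf (hpos : ∀ x : W, 0 ≤ x) (hE : ∀ m n : ℕ, m • y ≤ n • y → m ≤ n)
    {x : W} (hx : x ∈ Sfin y) : qf y x ≤ pf y x := by
  apply csSup_le (Qset_nonempty hpos x)
  intro r hr
  exact le_csInf (Pset_nonempty hx) (fun s hs => Qset_le_Pset hE r hr s hs)

lemma qf_nonneg (hpos : ∀ x : W, 0 ≤ x) (hE : ∀ m n : ℕ, m • y ≤ n • y → m ≤ n)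
    {x : W} (hx : x ∈ Sfin y) : 0 ≤ qf y x := by
  have h0 : (0:ℝ) ∈ Qset y x := ⟨0, 1, le_rfl, by simpa using hpos x, by simp⟩
  exact le_csSup (Qset_bddAbove hE hx) h0

lemma pf_mono {x x' : W} (hx' : x' ∈ Sfin y) (h : x ≤ x') : pf y x ≤ pf y x' := by
  apply le_csInf (Pset_nonempty hx')
  rintro s ⟨n, k, hk, hb, rfl⟩
  exact csInf_le Pset_bddBelow ⟨n, k, hk, (nsmul_le_nsmul_right h k).trans hb, rfl⟩

lemma qf_mono (hpos : ∀ x : W, 0 ≤ x) (hE : ∀ m n : ℕ, m • y ≤ n • y → m ≤ n)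
    {x x' : W} (hx' : x' ∈ Sfin y) (h : x ≤ x') : qf y x ≤ qf y x' := by
  apply csSup_le_csSup (Qset_bddAbove hE hx') (Qset_nonempty hpos x)
  rintro r ⟨n, k, hk, hb, rfl⟩
  exact ⟨n, k, hk, hb.trans (nsmul_le_nsmul_right h k), rfl⟩

lemma pf_add {a b : W} (ha : a ∈ Sfin y) (hb : b ∈ Sfin y) :
    pf y (a + b) ≤ pf y a + pf y b := by
  have key : ∀ r ∈ Pset y a, ∀ s ∈ Pset y b, pf y (a + b) ≤ r + s := by
    rintro r ⟨n, k, hk, hr, rfl⟩ s ⟨n', k', hk', hs, rfl⟩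
    have hmem : ((n : ℝ) / k + (n' : ℝ) / k') ∈ Pset y (a + b) := by
      refine ⟨n * k' + n' * k, k * k', Nat.one_le_iff_ne_zero.2 (by positivity), ?_, ?_⟩
      · calc (k * k') • (a + b) = k' • (k • a) + k • (k' • b) := by
              rw [nsmul_add, mul_nsmul, mul_comm k k', mul_nsmul]
        _ ≤ k' • (n • y) + k • (n' • y) :=
            add_le_add (nsmul_le_nsmul_right hr _) (nsmul_le_nsmul_right hs _)
        _ = (n * k' + n' * k) • y := by rw [← mul_nsmul, ← mul_nsmul, ← add_nsmul]
      · have hk0 : (k:ℝ) ≠ 0 := by positivity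
        have hk'0 : (k':ℝ) ≠ 0 := by positivity
        push_cast
        field_simp
        try ring
    exact csInf_le Pset_bddBelow hmem
  have step1 : ∀ s ∈ Pset y b, pf y (a + b) - s ≤ pf y a := fun s hs =>
    le_csInf (Pset_nonempty ha) (fun r hr => sub_le_iff_le_add.2 (key r hr s hs))
  have step2 : pf y (a + b) - pf y a ≤ pf y b := by
    apply le_csInf (Pset_nonempty hb)
    intro s hs
    have := step1 s hs
    linarith
  linarith

lemma qf_superadd (hpos : ∀ x : W, 0 ≤ x) (hE : ∀ m n : ℕ, m • y ≤ n • y → m ≤ n)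
    {a b : W} (ha : a ∈ Sfin y) (hb : b ∈ Sfin y) :
    qf y a + qf y b ≤ qf y (a + b) := by
  have hab : a + b ∈ Sfin y := (Sfin y).add_mem ha hb
  have key : ∀ r ∈ Qset y a, ∀ s ∈ Qset y b, r + s ≤ qf y (a + b) := by
    rintro r ⟨n, k, hk, hr, rfl⟩ s ⟨n', k', hk', hs, rfl⟩
    have hmem : ((n : ℝ) / k + (n' : ℝ) / k') ∈ Qset y (a + b) := by
      refine ⟨n * k' + n' * k, k * k', Nat.one_le_iff_ne_zero.2 (by positivity), ?_, ?_⟩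
      · calc (n * k' + n' * k) • y = k' • (n • y) + k • (n' • y) := by
              rw [add_nsmul, mul_nsmul, mul_nsmul]

        _ ≤ k' • (k • a) + k • (k' • b) :=
            add_le_add (nsmul_le_nsmul_right hr _) (nsmul_le_nsmul_right hs _)
        _ = (k * k') • (a + b) := by
            rw [nsmul_add, mul_nsmul, mul_comm k k', mul_nsmul]
      · have hk0 : (k:ℝ) ≠ 0 := by positivity
        have hk'0 : (k':ℝ) ≠ 0 := by positivity
        push_cast
        field_simp
        try ring
    exact le_csSup (Qset_bddAbove hE hab) hmem
  have step1 : ∀ s ∈ Qset y b, qf y a + s ≤ qf y (a + b) := by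
    intro s hs
    have : ∀ r ∈ Qset y a, r ≤ qf y (a + b) - s := fun r hr =>
      le_sub_iff_add_le.2 (key r hr s hs)
    have h2 : qf y a ≤ qf y (a + b) - s := csSup_le (Qset_nonempty hpos a) this
    linarith
  have : ∀ s ∈ Qset y b, s ≤ qf y (a + b) - qf y a := fun s hs =>
    le_sub_iff_add_le.2 (by
      have := step1 s hs; linarith)
  have h3 : qf y b ≤ qf y (a + b) - qf y a := csSup_le (Qset_nonempty hpos b) this
  linarith

lemma pf_y_le_one : pf y y ≤ 1 := by
  have : (1:ℝ) ∈ Pset y y := ⟨1, 1, le_rfl, le_rfl, by simp⟩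
  exact csInf_le Pset_bddBelow this

lemma one_le_qf_y (hE : ∀ m n : ℕ, m • y ≤ n • y → m ≤ n) : 1 ≤ qf y y := by
  have : (1:ℝ) ∈ Qset y y := ⟨1, 1, le_rfl, le_rfl, by simp⟩
  exact le_csSup (Qset_bddAbove hE (y_mem_Sfin y)) this

lemma pf_zero (hpos : ∀ x : W, 0 ≤ x) : pf y 0 = 0 := by
  have h0 : (0:ℝ) ∈ Pset y 0 := ⟨0, 1, le_rfl, by simp, by simp⟩
  refine le_antisymm (csInf_le Pset_bddBelow h0) ?_
  exact le_csInf ⟨0, h0⟩ (fun r hr => Pset_nonneg r hr)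

lemma qf_zero (hpos : ∀ x : W, 0 ≤ x) (hE : ∀ m n : ℕ, m • y ≤ n • y → m ≤ n) :
    qf y 0 = 0 := by
  have hsub : Qset y (0 : W) ⊆ {0} := by
    rintro r ⟨n, k, hk, hb, rfl⟩
    have : n • y ≤ 0 • y := by simpa using hb
    have : n = 0 := Nat.le_zero.1 (hE n 0 this)
    simp [this]
  have h0 : (0:ℝ) ∈ Qset y (0:W) := ⟨0, 1, le_rfl, by simp, by simp⟩
  refine le_antisymm ?_ (le_csSup ⟨0, fun r hr => le_of_eq (hsub hr)⟩ h0)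
  exact csSup_le ⟨0, h0⟩ (fun r hr => le_of_eq (hsub hr))

lemma pf_nonneg {x : W} (hx : x ∈ Sfin y) : 0 ≤ pf y x :=
  le_csInf (Pset_nonempty hx) (fun r hr => Pset_nonneg r hr)


variable (y) in
def Mset (z : ↥(Sfin y)) : Set ℝ :=
  {r | ∃ h : ↥(Sfin y), r = pf y ((z : W) + (h : W)) - qf y (h : W)}

variable (y) in
noncomputable def mf (z : ↥(Sfin y)) : ℝ := sInf (Mset y z)

section mf
variable (hpos : ∀ x : W, 0 ≤ x) (hE : ∀ m n : ℕ, m • y ≤ n • y → m ≤ n)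
include hpos hE

lemma Mset_lb {z : ↥(Sfin y)} : ∀ r ∈ Mset y z, qf y (z : W) ≤ r := by
  rintro r ⟨h, rfl⟩
  have h1 : qf y ((z : W) + h) ≤ pf y ((z : W) + h) :=
    qf_le_pf hpos hE ((Sfin y).add_mem z.2 h.2)
  have h2 : qf y (z : W) + qf y (h : W) ≤ qf y ((z : W) + h) :=
    qf_superadd hpos hE z.2 h.2
  linarith

lemma Mset_bddBelow {z : ↥(Sfin y)} : BddBelow (Mset y z) :=
  ⟨qf y (z : W), fun r hr => Mset_lb hpos hE r hr⟩

omit hpos hE in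
lemma Mset_nonempty {z : ↥(Sfin y)} : (Mset y z).Nonempty := ⟨_, 0, rfl⟩

lemma qf_le_mf {z : ↥(Sfin y)} : qf y (z : W) ≤ mf y z :=
  le_csInf Mset_nonempty (fun r hr => Mset_lb hpos hE r hr)

lemma mf_le_pf {z : ↥(Sfin y)} : mf y z ≤ pf y (z : W) := by
  have hmem : pf y ((z : W) + ((0 : ↥(Sfin y)) : W)) - qf y ((0 : ↥(Sfin y)) : W) ∈ Mset y z :=
    ⟨0, rfl⟩
  have := csInf_le (Mset_bddBelow hpos hE) hmem
  simpa [qf_zero hpos hE, mf] using this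

lemma mf_mono {z z' : ↥(Sfin y)} (h : (z : W) ≤ (z' : W)) : mf y z ≤ mf y z' := by
  apply le_csInf Mset_nonempty
  rintro r ⟨hh, rfl⟩
  have h1 : pf y ((z : W) + hh) ≤ pf y ((z' : W) + hh) :=
    pf_mono ((Sfin y).add_mem z'.2 hh.2) (add_le_add_left h _)
  have h2 : pf y ((z : W) + hh) - qf y (hh : W) ∈ Mset y z := ⟨hh, rfl⟩
  have h3 : mf y z ≤ pf y ((z : W) + hh) - qf y (hh : W) := csInf_le (Mset_bddBelow hpos hE) h2
  linarith

lemma mf_translate_le {x hh : ↥(Sfin y)} : mf y (x + hh) ≤ mf y hh + pf y (x : W) := by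
  have key : ∀ r ∈ Mset y hh, mf y (x + hh) ≤ r + pf y (x : W) := by
    rintro r ⟨h', rfl⟩
    have hmem : pf y (((x + hh : ↥(Sfin y)) : W) + h') - qf y (h' : W) ∈ Mset y (x + hh) :=
      ⟨h', rfl⟩
    have h1 : mf y (x + hh) ≤ pf y (((x + hh : ↥(Sfin y)) : W) + h') - qf y (h' : W) :=
      csInf_le (Mset_bddBelow hpos hE) hmem
    have h2 : pf y (((x + hh : ↥(Sfin y)) : W) + h') ≤ pf y (x : W) + pf y ((hh : W) + h') := by
      have : ((x + hh : ↥(Sfin y)) : W) + (h' : W) = (x : W) + ((hh : W) + h') := by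
        push_cast; rw [add_assoc]
      rw [this]
      exact pf_add x.2 ((Sfin y).add_mem hh.2 h'.2)
    linarith
  have h4 : ∀ r ∈ Mset y hh, mf y (x + hh) - pf y (x : W) ≤ r := fun r hr => by
    have := key r hr; linarith
  have h5 : mf y (x + hh) - pf y (x : W) ≤ mf y hh := le_csInf (Mset_nonempty (z := hh)) h4
  linarith

lemma mf_translate_ge {x hh : ↥(Sfin y)} : mf y hh + qf y (x : W) ≤ mf y (x + hh) := by
  apply le_csInf Mset_nonempty
  rintro r ⟨h', rfl⟩
  have hmem : pf y ((hh : W) + ((x + h' : ↥(Sfin y)) : W)) - qf y ((x + h' : ↥(Sfin y)) : W)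
      ∈ Mset y hh := ⟨x + h', rfl⟩
  have h1 : mf y hh ≤ pf y ((hh : W) + ((x + h' : ↥(Sfin y)) : W)) - qf y ((x + h' : ↥(Sfin y)) : W) :=
    csInf_le (Mset_bddBelow hpos hE) hmem
  have h2 : (hh : W) + ((x + h' : ↥(Sfin y)) : W) = ((x + hh : ↥(Sfin y)) : W) + (h' : W) := by
    push_cast; abel
  have h3 : qf y (x : W) + qf y (h' : W) ≤ qf y ((x + h' : ↥(Sfin y)) : W) := by
    have : ((x + h' : ↥(Sfin y)) : W) = (x : W) + (h' : W) := by push_cast; rfl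
    rw [this]
    exact qf_superadd hpos hE x.2 h'.2
  rw [h2] at h1
  linarith

end mf

section Phi
variable (hpos : ∀ x : W, 0 ≤ x) (hE : ∀ m n : ℕ, m • y ≤ n • y → m ≤ n)

noncomputable def Phi (x : W) (hx : x ∈ Sfin y) : ↥(BddFun ↥(Sfin y)) :=
  ⟨fun h => mf y (⟨x, hx⟩ + h) - mf y h, by
    refine ⟨pf y x, fun h => abs_le.2 ⟨?_, ?_⟩⟩
    · have h1 : mf y h + qf y x ≤ mf y (⟨x, hx⟩ + h) :=
        mf_translate_ge hpos hE (x := ⟨x, hx⟩) (hh := h)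
      have h2 : 0 ≤ qf y x := qf_nonneg hpos hE hx
      have h3 : 0 ≤ pf y x := pf_nonneg hx
      show -pf y x ≤ mf y (⟨x, hx⟩ + h) - mf y h
      linarith
    · have h1 : mf y (⟨x, hx⟩ + h) ≤ mf y h + pf y x :=
        mf_translate_le hpos hE (x := ⟨x, hx⟩) (hh := h)
      show mf y (⟨x, hx⟩ + h) - mf y h ≤ pf y x
      linarith⟩

lemma Phi_lb (x : W) (hx : x ∈ Sfin y) (h : ↥(Sfin y)) :
    qf y x ≤ (Phi hpos hE x hx : ↥(Sfin y) → ℝ) h := by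
  have h1 : mf y h + qf y x ≤ mf y (⟨x, hx⟩ + h) :=
    mf_translate_ge hpos hE (x := ⟨x, hx⟩) (hh := h)
  show qf y x ≤ mf y (⟨x, hx⟩ + h) - mf y h
  linarith

lemma Phi_ub (x : W) (hx : x ∈ Sfin y) (h : ↥(Sfin y)) :
    (Phi hpos hE x hx : ↥(Sfin y) → ℝ) h ≤ pf y x := by
  have h1 : mf y (⟨x, hx⟩ + h) ≤ mf y h + pf y x :=
    mf_translate_le hpos hE (x := ⟨x, hx⟩) (hh := h)
  show mf y (⟨x, hx⟩ + h) - mf y h ≤ pf y x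
  linarith

lemma Phi_mono (a b : W) (ha : a ∈ Sfin y) (hb : b ∈ Sfin y) (hab : a ≤ b) (h : ↥(Sfin y)) :
    (Phi hpos hE a ha : ↥(Sfin y) → ℝ) h ≤ (Phi hpos hE b hb : ↥(Sfin y) → ℝ) h := by
  have hle : ((⟨a, ha⟩ + h : ↥(Sfin y)) : W) ≤ ((⟨b, hb⟩ + h : ↥(Sfin y)) : W) :=
    add_le_add_left hab _
  have h1 : mf y (⟨a, ha⟩ + h) ≤ mf y (⟨b, hb⟩ + h) := mf_mono hpos hE hle
  show mf y (⟨a, ha⟩ + h) - mf y h ≤ mf y (⟨b, hb⟩ + h) - mf y h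
  linarith

noncomputable def PhiT (x : W) (hx : x ∈ Sfin y) (t : ↥(Sfin y)) : ↥(BddFun ↥(Sfin y)) :=
  ⟨fun h => (Phi hpos hE x hx : ↥(Sfin y) → ℝ) (h + t), by
    obtain ⟨C, hC⟩ := (Phi hpos hE x hx).2
    exact ⟨C, fun h => hC (h + t)⟩⟩

lemma Phi_split (a b : W) (ha : a ∈ Sfin y) (hb : b ∈ Sfin y) :
    Phi hpos hE (a + b) ((Sfin y).add_mem ha hb) =
      PhiT hpos hE a ha ⟨b, hb⟩ + Phi hpos hE b hb := by
  apply Subtype.ext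
  funext h
  show mf y (⟨a + b, (Sfin y).add_mem ha hb⟩ + h) - mf y h =
    (mf y (⟨a, ha⟩ + (h + ⟨b, hb⟩)) - mf y (h + ⟨b, hb⟩)) +
      (mf y (⟨b, hb⟩ + h) - mf y h)
  have e1 : h + (⟨b, hb⟩ : ↥(Sfin y)) = ⟨b, hb⟩ + h := add_comm _ _
  have e2 : (⟨a + b, (Sfin y).add_mem ha hb⟩ : ↥(Sfin y)) + h =
      ⟨a, ha⟩ + (⟨b, hb⟩ + h) := by
    apply Subtype.ext
    show a + b + (h : W) = a + (b + (h : W))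
    rw [add_assoc]
  rw [e1, e2]
  ring

lemma Phi_zero_eq : Phi hpos hE 0 (Sfin y).zero_mem = 0 := by
  apply Subtype.ext
  funext h
  show mf y (⟨0, (Sfin y).zero_mem⟩ + h) - mf y h = 0
  have e1 : (⟨0, (Sfin y).zero_mem⟩ : ↥(Sfin y)) + h = h := by
    apply Subtype.ext
    show 0 + (h : W) = (h : W)
    rw [zero_add]
  rw [e1, sub_self]

end Phi

end PIState

/-- If there is no state normalized at `y`, then some multiple of `y` is properly infinite. -/
theorem stmt1 {W : Type*} [AddCommMonoid W] [PartialOrder W] [IsOrderedAddMonoid W] (hpos : ∀ x : W, 0 ≤ x) (y : W)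
    (h : ¬ ∃ f : W → ℝ≥0∞,
        (∀ a b : W, f (a + b) = f a + f b) ∧ Monotone f ∧ f 0 = 0 ∧ f y = 1) :
    ∃ n : ℕ, 1 ≤ n ∧ 2 • (n • y) ≤ n • y := by
  by_contra hcon
  push_neg at hcon
  apply h
  have hE : ∀ m n : ℕ, m • y ≤ n • y → m ≤ n := E_of_noPI hpos y hcon
  classical
  obtain ⟨L, hub, hlb, hinv⟩ := PIState.exists_invariant_mean (H := ↥(PIState.Sfin y))
  refine ⟨fun x => if hx : x ∈ PIState.Sfin y
      then ENNReal.ofReal (L (PIState.Phi hpos hE x hx)) else ⊤, ?_, ?_, ?_, ?_⟩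
  · intro a b
    dsimp only
    by_cases ha : a ∈ PIState.Sfin y
    · by_cases hb : b ∈ PIState.Sfin y
      · have hab : a + b ∈ PIState.Sfin y := (PIState.Sfin y).add_mem ha hb
        rw [dif_pos hab, dif_pos ha, dif_pos hb]
        have hLa0 : 0 ≤ L (PIState.Phi hpos hE a ha) :=
          le_trans (PIState.qf_nonneg hpos hE ha)
            (hlb _ _ (fun hh => PIState.Phi_lb hpos hE a ha hh))
        have hLb0 : 0 ≤ L (PIState.Phi hpos hE b hb) :=
          le_trans (PIState.qf_nonneg hpos hE hb)
            (hlb _ _ (fun hh => PIState.Phi_lb hpos hE b hb hh))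
        have h1 : PIState.Phi hpos hE (a + b) hab =
            PIState.PhiT hpos hE a ha ⟨b, hb⟩ + PIState.Phi hpos hE b hb :=
          PIState.Phi_split hpos hE a b ha hb
        have hkey : L (PIState.Phi hpos hE (a + b) hab) =
            L (PIState.Phi hpos hE a ha) + L (PIState.Phi hpos hE b hb) := by
          rw [h1, map_add,
            hinv (PIState.Phi hpos hE a ha) (PIState.PhiT hpos hE a ha ⟨b, hb⟩) ⟨b, hb⟩
              (fun hh => rfl)]
        rw [hkey, ENNReal.ofReal_add hLa0 hLb0]
      · have hab : a + b ∉ PIState.Sfin y := fun hm =>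
          hb (PIState.mem_Sfin_of_le (y := y) hm (le_add_of_nonneg_left (hpos a)))
        rw [dif_neg hab, dif_neg hb]; simp
    · have hab : a + b ∉ PIState.Sfin y := fun hm =>
        ha (PIState.mem_Sfin_of_le (y := y) hm (le_add_of_nonneg_right (hpos b)))
      rw [dif_neg hab, dif_neg ha]; simp
  · intro a b hab'
    dsimp only
    by_cases hb : b ∈ PIState.Sfin y
    · have ha : a ∈ PIState.Sfin y := PIState.mem_Sfin_of_le (y := y) hb hab'
      rw [dif_pos ha, dif_pos hb]
      apply ENNReal.ofReal_le_ofReal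
      have hsub : (0:ℝ) ≤ L (PIState.Phi hpos hE b hb - PIState.Phi hpos hE a ha) := by
        apply hlb
        intro hh
        have h1 := PIState.Phi_mono hpos hE a b ha hb hab' hh
        show (0:ℝ) ≤ (PIState.Phi hpos hE b hb : ↥(PIState.Sfin y) → ℝ) hh -
          (PIState.Phi hpos hE a ha : ↥(PIState.Sfin y) → ℝ) hh
        linarith
      rw [map_sub] at hsub
      linarith
    · rw [dif_neg hb]; exact le_top
  · dsimp only
    rw [dif_pos (PIState.Sfin y).zero_mem, PIState.Phi_zero_eq hpos hE, map_zero,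
      ENNReal.ofReal_zero]
  · dsimp only
    rw [dif_pos (PIState.y_mem_Sfin y)]
    have h1 : L (PIState.Phi hpos hE y (PIState.y_mem_Sfin y)) ≤ PIState.pf y y :=
      hub _ _ (fun hh => PIState.Phi_ub hpos hE y _ hh)
    have h2 : PIState.qf y y ≤ L (PIState.Phi hpos hE y (PIState.y_mem_Sfin y)) :=
      hlb _ _ (fun hh => PIState.Phi_lb hpos hE y _ hh)
    have h3 : L (PIState.Phi hpos hE y (PIState.y_mem_Sfin y)) = 1 :=
      le_antisymm (h1.trans PIState.pf_y_le_one)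
        (le_trans (PIState.one_le_qf_y hE) h2)
    rw [h3, ENNReal.ofReal_one]
end

section
/- Let W be a positively ordered abelian monoid, x ∈ W, and y₁, …, yₖ ∈ W such that x <ₛ yⱼ for each j (i.e., for each j there is m with (m+1)x ≤ m yⱼ). Then β(x, y₁ + ⋯ + yₖ) ≤ 1/k. -/
open scoped ENNReal

/-- If `x <ₛ yⱼ` for `j = 1,…,k`, then `β(x, y₁ + ⋯ + y_k) ≤ 1/k`. -/
theorem stmt5 {W : Type*} [AddCommMonoid W] [PartialOrder W] [IsOrderedAddMonoid W] (hpos : ∀ x : W, 0 ≤ x)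
    (x : W) (k : ℕ) (hk : 1 ≤ k) (y : Fin k → W)
    (h : ∀ j : Fin k, ∃ m : ℕ, 1 ≤ m ∧ (m + 1) • x ≤ m • y j) :
    beta x (∑ j, y j) ≤ 1 / (k : ℝ) := by
  classical
  choose m hm1 hm2 using h
  set M := ∏ j, m j with hM
  have hM1 : 1 ≤ M := Finset.one_le_prod' fun j _ => hm1 j
  have key : ∀ j, (M + 1) • x ≤ M • y j := by
    intro j
    obtain ⟨q, hq⟩ := Finset.dvd_prod_of_mem m (Finset.mem_univ j)
    have hq1 : 1 ≤ q := by
      rcases Nat.eq_zero_or_pos q with h0 | h0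
      · exfalso; rw [h0, mul_zero] at hq; omega
      · exact h0
    have h1 : (M + q) • x ≤ M • y j := by
      calc (M + q) • x = q • ((m j + 1) • x) := by
            rw [← mul_nsmul]; congr 1; rw [hM, hq]; ring
        _ ≤ q • (m j • y j) := nsmul_le_nsmul_right (hm2 j) q
        _ = M • y j := by rw [← mul_nsmul]; congr 1; rw [hM, hq]
    exact le_trans (nsmul_le_nsmul_left (hpos x) (by omega)) h1
  have hsum : (k * (M + 1)) • x ≤ M • ∑ j, y j := by
    calc (k * (M + 1)) • x = ∑ _j : Fin k, (M + 1) • x := by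
          rw [Finset.sum_const, Finset.card_univ, Fintype.card_fin, ← mul_nsmul, Nat.mul_comm]
      _ ≤ ∑ j, M • y j := Finset.sum_le_sum fun j _ => key j
      _ = M • ∑ j, y j := (Finset.smul_sum).symm
  have hbdd : BddBelow {r : ℝ | ∃ k l : ℕ, 0 < k ∧ k • x ≤ l • (∑ j, y j) ∧ r = (l : ℝ) / (k : ℝ)} := by
    refine ⟨0, ?_⟩
    rintro r ⟨a, b, ha, _, rfl⟩
    positivity
  have hmem : ((M : ℝ) / ((k * (M + 1) : ℕ) : ℝ)) ∈
      {r : ℝ | ∃ k l : ℕ, 0 < k ∧ k • x ≤ l • (∑ j, y j) ∧ r = (l : ℝ) / (k : ℝ)} :=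
    ⟨k * (M + 1), M, by positivity, hsum, rfl⟩
  refine le_trans (csInf_le hbdd hmem) ?_
  have hk' : (0 : ℝ) < (k : ℝ) := by exact_mod_cast hk
  have hM' : (0 : ℝ) < (M : ℝ) + 1 := by positivity
  push_cast
  rw [div_le_div_iff₀ (by positivity) hk']
  nlinarith
end

section
/- In any ordered abelian semigroup W, for elements x, y: β(x, y) < 1 if and only if x <ₛ y, i.e., there exists k ∈ ℕ, k ≥ 1, with (k+1)x ≤ ky. -/
open scoped ENNReal

/-- `β(x,y) < 1` iff `x <ₛ y`. -/
theorem stmt8 {W : Type*} [AddCommMonoid W] [PartialOrder W] [IsOrderedAddMonoid W] (hpos : ∀ x : W, 0 ≤ x)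
    (x y : W) (hprop : ∃ n : ℕ, x ≤ n • y) :
    beta x y < 1 ↔ ∃ k : ℕ, 1 ≤ k ∧ (k + 1) • x ≤ k • y := by
  have hbdd : BddBelow {r : ℝ | ∃ k l : ℕ, 0 < k ∧ k • x ≤ l • y ∧ r = (l : ℝ) / (k : ℝ)} := by
    refine ⟨0, ?_⟩
    rintro r ⟨k, l, hk, -, rfl⟩
    positivity
  constructor
  · intro h
    by_contra hc
    push_neg at hc
    have h1 : (1 : ℝ) ≤ beta x y := by
      apply le_csInf
      · obtain ⟨n, hn⟩ := hprop
        exact ⟨n, ⟨1, n, one_pos, by simpa using hn, by simp⟩⟩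
      · rintro r ⟨k, l, hk, hkl, rfl⟩
        rw [le_div_iff₀ (by exact_mod_cast hk), one_mul]
        by_contra hlt
        push_neg at hlt
        have hlk : l < k := by exact_mod_cast hlt
        have h2 : (2 * k) • x ≤ (2 * l) • y := by
          rw [mul_smul, mul_smul]
          exact nsmul_le_nsmul_right hkl 2
        have h3 : (2 * l) • y ≤ (2 * k - 1) • y :=
          nsmul_le_nsmul_left (hpos y) (by omega)
        have h4 := hc (2 * k - 1) (by omega)
        have : (2 * k - 1 + 1) • x ≤ (2 * k - 1) • y := by
          have : 2 * k - 1 + 1 = 2 * k := by omega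
          rw [this]
          exact h2.trans h3
        exact h4 this
    linarith
  · rintro ⟨k, hk, hkl⟩
    have hmem : ((k : ℝ) / ((k : ℝ) + 1)) ∈
        {r : ℝ | ∃ k l : ℕ, 0 < k ∧ k • x ≤ l • y ∧ r = (l : ℝ) / (k : ℝ)} :=
      ⟨k + 1, k, by omega, hkl, by push_cast; ring⟩
    calc beta x y ≤ (k : ℝ) / ((k : ℝ) + 1) := csInf_le hbdd hmem
      _ < 1 := by
          rw [div_lt_one (by positivity)]
          linarith
end

section
/- Let S be a Cu-semigroup (a positively ordered abelian monoid satisfying: (O1) increasing sequences have suprema; (O2) every element is the supremum of a rapidly increasing sequence aₙ ≪ aₙ₊₁; (O3) compact containment is additive; (O4) suprema are additive). If (xₙ) is a full sequence in S (increasing, and for all z' ≪ z there exist n, m with z' ≤ m·xₙ), then the increasing sequence (n·xₙ) has supremum equal to the largest element of S; in particular, S has a largest element. -/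
open scoped ENNReal

/-- For a full sequence `(xₙ)` in a Cu-semigroup, the sequence `(n • xₙ)` has a supremum
which is the largest element of `S`; in particular `S` has a largest element. -/
theorem stmt9 {S : Type*} [AddCommMonoid S] [PartialOrder S] [IsOrderedAddMonoid S] (hCu : CuSemigroup S)
    (x : ℕ → S) (hfull : CuFullSeq x) :
    ∃ s : S, IsLUB (Set.range fun n => n • x n) s ∧ ∀ t : S, t ≤ s := by
  obtain ⟨hmono, habs⟩ := hfull
  have hseq : Monotone fun n => n • x n := by
    apply monotone_nat_of_le_succ
    intro n
    calc n • x n ≤ n • x (n+1) := nsmul_le_nsmul_right (hmono (Nat.le_succ n)) n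
      _ ≤ (n+1) • x (n+1) := nsmul_le_nsmul_left (hCu.pos _) (Nat.le_succ n)
  obtain ⟨s, hs⟩ := hCu.O1 _ hseq
  refine ⟨s, hs, fun t => ?_⟩
  obtain ⟨c, hc, hlub⟩ := hCu.O2 t
  refine hlub.2 ?_
  rintro _ ⟨k, rfl⟩
  obtain ⟨n, m, hnm⟩ := habs (c k) (c (k+1)) (hc k)
  have key : m • x n ≤ (max m n) • x (max m n) := by
    calc m • x n ≤ m • x (max m n) := nsmul_le_nsmul_right (hmono (le_max_right m n)) m
      _ ≤ (max m n) • x (max m n) := nsmul_le_nsmul_left (hCu.pos _) (le_max_left m n)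
  exact le_trans hnm (le_trans key (hs.1 ⟨max m n, rfl⟩))
end

section
/- Let S be a Cu-semigroup and (xₙ) a full sequence in S. Then there exists a full sequence (xₙ') in S with xₙ' ≪ xₙ for each n. -/
open scoped ENNReal

section Aux
variable {S : Type*} [AddCommMonoid S] [PartialOrder S] [IsOrderedAddMonoid S]

lemma wb_le {a b : S} (h : CuWayBelow a b) : a ≤ b := by
  obtain ⟨n, hn⟩ := h (fun _ => b) monotone_const b
    (by simpa [Set.range_const] using isLUB_singleton) le_rfl
  exact hn

lemma wb_of_le_wb {a b c : S} (h : a ≤ b) (h2 : CuWayBelow b c) : CuWayBelow a c := by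
  intro d hd s hs hcs
  obtain ⟨n, hn⟩ := h2 d hd s hs hcs
  exact ⟨n, h.trans hn⟩

lemma wb_of_wb_le {a b c : S} (h : CuWayBelow a b) (h2 : b ≤ c) : CuWayBelow a c :=
  fun d hd s hs hcs => h d hd s hs (h2.trans hcs)

lemma wb_interp (hCu : CuSemigroup S) {a b : S} (h : CuWayBelow a b) :
    ∃ c, CuWayBelow a c ∧ CuWayBelow c b := by
  obtain ⟨c, hc, hlub⟩ := hCu.O2 b
  have hmono : Monotone c := monotone_nat_of_le_succ fun n => wb_le (hc n)
  obtain ⟨N, hN⟩ := h c hmono b hlub le_rfl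
  exact ⟨c (N+1), wb_of_le_wb hN (hc N),
    wb_of_wb_le (hc (N+1)) (hlub.1 (Set.mem_range_self _))⟩

lemma smul_lub (hCu : CuSemigroup S) (m : ℕ) (c : ℕ → S) (hc : Monotone c)
    (s : S) (hs : IsLUB (Set.range c) s) :
    IsLUB (Set.range fun k => m • c k) (m • s) := by
  induction m with
  | zero => simpa [Set.range_const] using isLUB_singleton
  | succ m ih =>
    have := hCu.O4 (fun k => m • c k) c
      (fun i j hij => nsmul_le_nsmul_right (hc hij) m) hc (m • s) s ih hs
    simpa [succ_nsmul] using this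

lemma cu_step (hCu : CuSemigroup S) (a b : S) (hab : a ≤ b) (cn : ℕ → S)
    (h1 : ∀ k, CuWayBelow (cn k) (cn (k+1))) (h2 : IsLUB (Set.range cn) a) :
    ∃ cm : ℕ → S, ((∀ k, CuWayBelow (cm k) (cm (k+1))) ∧ IsLUB (Set.range cm) b) ∧
      ∀ k, cn k ≤ cm k := by
  obtain ⟨d, hd, hdl⟩ := hCu.O2 b
  have hdmono : Monotone d := monotone_nat_of_le_succ fun n => wb_le (hd n)
  have key : ∀ k, ∃ j, cn k ≤ d j := by
    intro k
    have : CuWayBelow (cn k) b :=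
      wb_of_wb_le (h1 k) ((h2.1 (Set.mem_range_self _)).trans hab)
    exact this d hdmono b hdl le_rfl
  choose j hj using key
  set φ : ℕ → ℕ := fun k => (Finset.range (k+1)).sup j + k with hφ
  have hφj : ∀ k, j k ≤ φ k := fun k =>
    le_add_of_le_of_nonneg (Finset.le_sup (Finset.self_mem_range_succ k)) (Nat.zero_le k)
  have hφk : ∀ k, k ≤ φ k := fun k => Nat.le_add_left k _
  have hφs : ∀ k, φ k + 1 ≤ φ (k+1) := by
    intro k
    have : (Finset.range (k+1)).sup j ≤ (Finset.range (k+1+1)).sup j :=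
      Finset.sup_mono (Finset.range_subset_range.2 (Nat.le_succ _))
    simp only [hφ]; omega
  refine ⟨fun k => d (φ k), ⟨fun k => wb_of_wb_le (hd (φ k)) (hdmono (hφs k)), ?_⟩,
    fun k => (hj k).trans (hdmono (hφj k))⟩
  constructor
  · rintro _ ⟨k, rfl⟩
    exact hdl.1 (Set.mem_range_self _)
  · intro u hu
    refine hdl.2 ?_
    rintro _ ⟨i, rfl⟩
    exact (hdmono (hφk i)).trans (hu (Set.mem_range_self i))

end Aux

/-- Every full sequence in a Cu-semigroup admits a full sequence compactly contained in it
termwise. -/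

theorem stmt10 {S : Type*} [AddCommMonoid S] [PartialOrder S] [IsOrderedAddMonoid S] (hCu : CuSemigroup S)
    (x : ℕ → S) (hfull : CuFullSeq x) :
    ∃ x' : ℕ → S, CuFullSeq x' ∧ ∀ n : ℕ, CuWayBelow (x' n) (x n) := by
  obtain ⟨hxmono, hxfull⟩ := hfull
  obtain ⟨c0, hc0, hl0⟩ := hCu.O2 (x 0)
  choose! F hF using fun n (cn : ℕ → S)
    (h : (∀ k, CuWayBelow (cn k) (cn (k+1))) ∧ IsLUB (Set.range cn) (x n)) =>
    cu_step hCu (x n) (x (n+1)) (hxmono n.le_succ) cn h.1 h.2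
  set c : ℕ → ℕ → S := fun n => Nat.rec c0 F n with hc
  have hcsucc : ∀ n, c (n+1) = F n (c n) := fun n => rfl
  have hinv : ∀ n, (∀ k, CuWayBelow (c n k) (c n (k+1))) ∧ IsLUB (Set.range (c n)) (x n) := by
    intro n
    induction n with
    | zero => exact ⟨hc0, hl0⟩
    | succ n ih => exact (hF n (c n) ih).1
  have hlink : ∀ n k, c n k ≤ c (n+1) k := fun n k => (hF n (c n) (hinv n)).2 k
  have hkmono : ∀ n, Monotone (c n) := fun n =>
    monotone_nat_of_le_succ fun k => wb_le ((hinv n).1 k)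
  have hnmono : ∀ k, Monotone fun n => c n k := fun k =>
    monotone_nat_of_le_succ fun n => hlink n k
  refine ⟨fun n => c n n, ⟨monotone_nat_of_le_succ fun n =>
    (hlink n n).trans (hkmono (n+1) n.le_succ), ?_⟩, fun n =>
    wb_of_wb_le ((hinv n).1 n) ((hinv n).2.1 (Set.mem_range_self _))⟩
  intro z' z hz
  obtain ⟨z'', h1, h2⟩ := wb_interp hCu hz
  obtain ⟨n, m, hm⟩ := hxfull z'' z h2
  have hwb : CuWayBelow z' (m • x n) := wb_of_wb_le h1 hm
  obtain ⟨k, hk⟩ := hwb (fun k => m • c n k)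
    (fun i j hij => nsmul_le_nsmul_right (hkmono n hij) m) (m • x n)
    (smul_lub hCu m (c n) (hkmono n) (x n) (hinv n).2) le_rfl
  refine ⟨max n k, m, hk.trans ?_⟩
  exact nsmul_le_nsmul_right
    ((hnmono k (le_max_left n k)).trans (hkmono (max n k) (le_max_right n k))) m
end

section
/- A Cu-semigroup S has ω-comparison if and only if it satisfies the following a priori weaker property: whenever x' ≪ x and (yⱼ) is a sequence with x <ₛ yⱼ and yⱼ ≪ ∞ for all j (where ∞ is a largest element of S, assumed to exist), then x' ≤ y₁ + ⋯ + yₙ for some n. -/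
open scoped ENNReal

theorem cuWB_le {S : Type*} [Preorder S] {a b : S} (h : CuWayBelow a b) : a ≤ b := by
  obtain ⟨n, hn⟩ := h (fun _ => b) monotone_const b
    (by simpa [Set.range_const] using isLUB_singleton (a := b)) le_rfl
  exact hn

theorem cuWB_of_le_wb {S : Type*} [Preorder S] {a b c : S} (h1 : a ≤ b)
    (h2 : CuWayBelow b c) : CuWayBelow a c := fun d hd s hs hcs => by
  obtain ⟨n, hn⟩ := h2 d hd s hs hcs
  exact ⟨n, h1.trans hn⟩

theorem cuWB_of_wb_le {S : Type*} [Preorder S] {a b c : S} (h1 : CuWayBelow a b)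
    (h2 : b ≤ c) : CuWayBelow a c := fun d hd s hs hcs => h1 d hd s hs (h2.trans hcs)

theorem cuWB_zero {S : Type*} [AddCommMonoid S] [PartialOrder S] [IsOrderedAddMonoid S] (hCu : CuSemigroup S) (b : S) :
    CuWayBelow (0 : S) b := fun c _ _ _ _ => ⟨0, hCu.pos _⟩

theorem cuWB_smul {S : Type*} [AddCommMonoid S] [PartialOrder S] [IsOrderedAddMonoid S] (hCu : CuSemigroup S) {a b : S}
    (h : CuWayBelow a b) (k : ℕ) : CuWayBelow (k • a) (k • b) := by
  induction k with
  | zero => simpa using cuWB_zero hCu (0 : S)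
  | succ n ih =>
    rw [succ_nsmul, succ_nsmul]
    exact hCu.O3 _ _ _ _ ih h

theorem cu_smul_mono {S : Type*} [AddCommMonoid S] [PartialOrder S] [IsOrderedAddMonoid S] {d : ℕ → S} (hd : Monotone d)
    (k : ℕ) : Monotone fun n => k • d n := by
  intro i j hij
  induction k with
  | zero => simp
  | succ n ih =>
    simp only [succ_nsmul]
    exact add_le_add ih (hd hij)

theorem cu_smul_lub {S : Type*} [AddCommMonoid S] [PartialOrder S] [IsOrderedAddMonoid S] (hCu : CuSemigroup S)
    {d : ℕ → S} (hd : Monotone d) {y : S} (hy : IsLUB (Set.range d) y) (k : ℕ) :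
    IsLUB (Set.range fun n => (k : ℕ) • d n) (k • y) := by
  induction k with
  | zero =>
    simpa [Set.range_const] using isLUB_singleton (a := (0 : S))
  | succ n ih =>
    have := hCu.O4 (fun m => n • d m) d (cu_smul_mono hd n) hd (n • y) y ih hy
    simpa [succ_nsmul] using this

/-- ω-comparison is equivalent to its a priori weaker version where all the `yⱼ` are
compactly contained in the largest element `∞`. -/
theorem stmt11 {S : Type*} [AddCommMonoid S] [PartialOrder S] [IsOrderedAddMonoid S] (hCu : CuSemigroup S)
    (infty : S) (htop : ∀ s : S, s ≤ infty) :
    OmegaComparison S ↔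
      (∀ (x' x : S) (y : ℕ → S), CuWayBelow x' x →
        (∀ j : ℕ, ∃ k : ℕ, 1 ≤ k ∧ (k + 1) • x ≤ k • y j) →
        (∀ j : ℕ, CuWayBelow (y j) infty) →
        ∃ n : ℕ, x' ≤ ∑ j ∈ Finset.range n, y j) := by
  constructor
  · intro h x' x y hx'x hy _
    exact h x' x y hx'x hy
  · intro h x' x y hx'x hy
    obtain ⟨c, hc, hcx⟩ := hCu.O2 x
    have hcmono : Monotone c := monotone_nat_of_le_succ fun n => cuWB_le (hc n)
    obtain ⟨m, hm⟩ := hx'x c hcmono x hcx le_rfl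
    set x'' := c (m + 1) with hx''def
    have hx'x'' : CuWayBelow x' x'' := cuWB_of_le_wb hm (hc m)
    have hx''x : CuWayBelow x'' x :=
      cuWB_of_wb_le (hc (m + 1)) (hcx.1 ⟨m + 2, rfl⟩)
    have key : ∀ j, ∃ y' : S, (∃ k : ℕ, 1 ≤ k ∧ (k + 1) • x'' ≤ k • y') ∧
        CuWayBelow y' infty ∧ y' ≤ y j := by
      intro j
      obtain ⟨k, hk1, hk2⟩ := hy j
      obtain ⟨d, hdwb, hdy⟩ := hCu.O2 (y j)
      have hdmono : Monotone d := monotone_nat_of_le_succ fun n => cuWB_le (hdwb n)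
      have hwb : CuWayBelow ((k + 1) • x'') ((k + 1) • x) := cuWB_smul hCu hx''x (k + 1)
      obtain ⟨i, hi⟩ := hwb (fun n => k • d n) (cu_smul_mono hdmono k) (k • y j)
        (cu_smul_lub hCu hdmono hdy k) hk2
      refine ⟨d (i + 1), ⟨k, hk1, hi.trans (cu_smul_mono hdmono k (Nat.le_succ i))⟩,
        cuWB_of_wb_le (hdwb (i + 1)) (htop _), (cuWB_le (hdwb (i + 1))).trans (hdy.1 ⟨i + 2, rfl⟩)⟩
    choose y' h1 h2 h3 using key
    obtain ⟨n, hn⟩ := h x' x'' y' hx'x'' h1 h2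
    exact ⟨n, hn.trans (Finset.sum_le_sum fun j _ => h3 j)⟩
end

section
/- Let S be a simple Cu-semigroup. If S satisfies the β-comparison property, then S satisfies ω-comparison. -/
open scoped ENNReal

section AuxStmt12

variable {S : Type*} [AddCommMonoid S] [PartialOrder S] [IsOrderedAddMonoid S]

lemma aux12_smul_le_smul {a b : S} (h : a ≤ b) (n : ℕ) : n • a ≤ n • b := by
  induction n with
  | zero => simp
  | succ k ih => rw [succ_nsmul, succ_nsmul]; exact add_le_add ih h

lemma aux12_smul_le_smul_nat {a : S} (ha : 0 ≤ a) {m n : ℕ} (h : m ≤ n) :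
    m • a ≤ n • a := by
  obtain ⟨d, rfl⟩ := Nat.exists_eq_add_of_le h
  rw [add_nsmul]
  exact le_add_of_nonneg_right (nsmul_nonneg ha d)

-- Way-below definition copied for aux lemmas (will match the pinned one definitionally)
lemma aux12_wb_le {a b : S}
    (h : ∀ c : ℕ → S, Monotone c → ∀ s : S, IsLUB (Set.range c) s → b ≤ s → ∃ n, a ≤ c n) :
    a ≤ b := by
  obtain ⟨n, hn⟩ := h (fun _ => b) monotone_const b
    (by rw [Set.range_const]; exact isLUB_singleton) le_rfl
  exact hn

lemma aux12_key (pos : ∀ z : S, 0 ≤ z) {x : S} {y : ℕ → S}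
    (hy : ∀ j, ∃ k : ℕ, 1 ≤ k ∧ (k + 1) • x ≤ k • y j) :
    ∀ n : ℕ, ∃ K : ℕ, 0 < K ∧ (n * (K + 1)) • x ≤ K • ∑ j ∈ Finset.range n, y j := by
  intro n
  induction n with
  | zero => exact ⟨1, one_pos, by simp⟩
  | succ n ih =>
    obtain ⟨K, hK, hKle⟩ := ih
    obtain ⟨k, hk, hkle⟩ := hy n
    refine ⟨K * k, Nat.mul_pos hK hk, ?_⟩
    rw [Finset.sum_range_succ]
    have A : (k * (n * (K + 1))) • x ≤ (K * k) • (∑ j ∈ Finset.range n, y j) := by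
      have h := aux12_smul_le_smul hKle k
      rw [← mul_nsmul', ← mul_nsmul', mul_comm k K] at h
      exact h
    have B : (K * (k + 1)) • x ≤ (K * k) • y n := by
      have h := aux12_smul_le_smul hkle K
      rw [← mul_nsmul', ← mul_nsmul'] at h
      exact h
    have C : (k * (n * (K + 1)) + K * (k + 1)) • x ≤
        (K * k) • (∑ j ∈ Finset.range n, y j + y n) := by
      rw [add_nsmul, nsmul_add]; exact add_le_add A B
    refine le_trans (aux12_smul_le_smul_nat (pos x) ?_) C
    nlinarith [hK, hk]

end AuxStmt12

section AuxStmt12b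

variable {S : Type*} [AddCommMonoid S] [PartialOrder S] [IsOrderedAddMonoid S]

lemma aux12_wb_mono {a' a b b' : S} (h1 : a' ≤ a) (h2 : CuWayBelow a b) (h3 : b ≤ b') :
    CuWayBelow a' b' := by
  intro c hc s hs hbs
  obtain ⟨n, hn⟩ := h2 c hc s hs (le_trans h3 hbs)
  exact ⟨n, le_trans h1 hn⟩

end AuxStmt12b

/-- In a simple Cu-semigroup, β-comparison implies ω-comparison. -/
theorem stmt12 {S : Type*} [AddCommMonoid S] [PartialOrder S] [IsOrderedAddMonoid S] (hCu : CuSemigroup S)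
    (hsimple : CuSimple S) (hβ : BetaComparison S) :
    OmegaComparison S := by
  intro x' x y hwb hy
  by_cases hx : x = 0
  · subst hx
    have h0 : x' ≤ 0 := aux12_wb_le hwb
    exact ⟨0, by simpa using h0⟩
  · -- y 0 ≠ 0
    have hy0 : y 0 ≠ 0 := by
      intro h0
      obtain ⟨k, hk, hkle⟩ := hy 0
      rw [h0, smul_zero] at hkle
      have hx1 : x ≤ (k + 1) • x := by
        have := aux12_smul_le_smul_nat (hCu.pos x) (show 1 ≤ k + 1 by omega)
        simpa using this
      exact hx (le_antisymm (le_trans hx1 hkle) (hCu.pos x))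
    set c' : ℕ → S := fun n => ∑ j ∈ Finset.range n, y j with hc'def
    have hc'mono : Monotone c' := by
      apply monotone_nat_of_le_succ
      intro n
      simp only [hc'def, Finset.sum_range_succ]
      exact le_add_of_nonneg_right (hCu.pos _)
    obtain ⟨s, hs⟩ := hCu.O1 c' hc'mono
    obtain ⟨c, hc1, hc2⟩ := hCu.O2 x
    have hcmono : Monotone c := monotone_nat_of_le_succ (fun n => aux12_wb_le (hc1 n))
    obtain ⟨n0, hn0⟩ := hwb c hcmono x hc2 le_rfl
    set x'' := c (n0 + 1) with hx''def
    have hx''x : x'' ≤ x := hc2.1 ⟨n0 + 1, rfl⟩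
    have hx''wb : CuWayBelow x'' x :=
      aux12_wb_mono le_rfl (hc1 (n0 + 1)) (hc2.1 ⟨n0 + 2, rfl⟩)
    have hx'x'' : CuWayBelow x' x'' := aux12_wb_mono hn0 (hc1 n0) le_rfl
    obtain ⟨m, hm⟩ := hsimple (y 0) x hy0 hx x'' hx''wb
    have hy0s : y 0 ≤ s := by
      have h1 := hs.1 (Set.mem_range_self 1)
      simpa [hc'def, Finset.sum_range_one] using h1
    have hbound : x'' ≤ m • s := le_trans hm (aux12_smul_le_smul hy0s m)
    have hkey := aux12_key hCu.pos hy
    -- beta x'' s = 0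
    have hT : ∀ n : ℕ, 0 < n → ∃ r ∈ {r : ℝ | ∃ k l : ℕ, 0 < k ∧ k • x'' ≤ l • s ∧
        r = (l : ℝ) / (k : ℝ)}, r ≤ 1 / (n : ℝ) := by
      intro n hn
      obtain ⟨K, hK, hKle⟩ := hkey n
      refine ⟨(K : ℝ) / ((n * (K + 1) : ℕ) : ℝ), ⟨n * (K + 1), K, ?_, ?_, rfl⟩, ?_⟩
      · positivity
      · calc (n * (K + 1)) • x'' ≤ (n * (K + 1)) • x := aux12_smul_le_smul hx''x _
          _ ≤ K • c' n := hKle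
          _ ≤ K • s := aux12_smul_le_smul (hs.1 (Set.mem_range_self n)) K
      · have hn' : (0 : ℝ) < n := by exact_mod_cast hn
        have hK' : (0 : ℝ) < K := by exact_mod_cast hK
        rw [div_le_div_iff₀ (by positivity) hn']
        push_cast
        nlinarith
    have hTnn : ∀ r ∈ {r : ℝ | ∃ k l : ℕ, 0 < k ∧ k • x'' ≤ l • s ∧
        r = (l : ℝ) / (k : ℝ)}, 0 ≤ r := by
      rintro r ⟨k, l, hk, _, rfl⟩
      positivity
    have hβ0 : beta x'' s = 0 := by
      unfold beta
      obtain ⟨r1, hr1, _⟩ := hT 1 one_pos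
      refine le_antisymm ?_ (le_csInf ⟨r1, hr1⟩ hTnn)
      by_contra h
      push_neg at h
      obtain ⟨n, hlt⟩ := exists_nat_one_div_lt h
      obtain ⟨r, hrT, hr⟩ := hT (n + 1) (Nat.succ_pos n)
      have h1 : sInf _ ≤ r := csInf_le ⟨0, hTnn⟩ hrT
      have : (1 : ℝ) / ((n : ℝ) + 1) = 1 / ((n + 1 : ℕ) : ℝ) := by push_cast; ring
      rw [this] at hlt
      linarith
    have hx''s : x'' ≤ s := hβ x'' s ⟨m, hbound⟩ hβ0
    exact hx'x'' c' hc'mono s hs hx''s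
end

section
/- The set S = {0, 1, ∞} with 1 + 1 = ∞, ∞ + x = ∞, and order 0 < 1 < ∞, is a simple Cu-semigroup satisfying ω-comparison but failing β-comparison: β(1, 1) = 0 yet 1 ≠ ∞. -/
open scoped ENNReal

/-- The semigroup `{0, 1, ∞}` with `1 + 1 = ∞`. -/
inductive S3 : Type
  | zero : S3
  | one : S3
  | inf : S3
  deriving DecidableEq

namespace S3

/-- Addition: sums of nonzero elements are `∞`. -/
def add : S3 → S3 → S3
  | zero, a => a
  | a, zero => a
  | _, _ => inf

/-- Rank function inducing the linear order `0 < 1 < ∞`. -/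
def rank : S3 → ℕ
  | zero => 0
  | one => 1
  | inf => 2

instance : Zero S3 := ⟨zero⟩
instance : Add S3 := ⟨add⟩

instance : AddCommMonoid S3 where
  zero_add a := by cases a <;> rfl
  add_zero a := by cases a <;> rfl
  add_assoc a b c := by cases a <;> cases b <;> cases c <;> rfl
  add_comm a b := by cases a <;> cases b <;> rfl
  nsmul := nsmulRec

instance : PartialOrder S3 :=
  PartialOrder.lift rank (fun a b h => by
    cases a <;> cases b <;> first | rfl | (exfalso; simp [rank] at h))

instance : DecidableRel ((· ≤ ·) : S3 → S3 → Prop) := fun a b => inferInstanceAs (Decidable (rank a ≤ rank b))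

instance : IsOrderedAddMonoid S3 where
  add_le_add_left a b h c := by
    cases a <;> cases b <;> cases c <;> revert h <;> decide

end S3

namespace S3

lemma le_inf' : ∀ s : S3, s ≤ S3.inf := by intro s; cases s <;> decide

lemma exists_max (c : ℕ → S3) : ∃ n, ∀ m, c m ≤ c n := by
  by_cases h : ∃ n, c n = S3.inf
  · obtain ⟨n, hn⟩ := h
    exact ⟨n, fun m => hn ▸ le_inf' (c m)⟩
  · push_neg at h
    by_cases h2 : ∃ n, c n = S3.one
    · obtain ⟨n, hn⟩ := h2
      refine ⟨n, fun m => ?_⟩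
      cases hm : c m
      · rw [hn]; decide
      · rw [hn]
      · exact absurd hm (h m)
    · push_neg at h2
      refine ⟨0, fun m => ?_⟩
      cases hm : c m
      · cases h0 : c 0
        · decide
        · decide
        · exact absurd h0 (h 0)
      · exact absurd hm (h2 m)
      · exact absurd hm (h m)

lemma wayBelow_iff (a b : S3) : CuWayBelow a b ↔ a ≤ b := by
  constructor
  · intro h
    obtain ⟨n, hn⟩ := h (fun _ => b) monotone_const b
      (by rw [Set.range_const]; exact isLUB_singleton) le_rfl
    exact hn
  · intro hab c _ s hs hbs
    obtain ⟨n, hn⟩ := exists_max c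
    have hsn : s ≤ c n := hs.2 (fun x hx => by obtain ⟨m, rfl⟩ := hx; exact hn m)
    exact ⟨n, hab.trans (hbs.trans hsn)⟩

lemma two_nsmul_ne_zero (x : S3) (hx : x ≠ 0) : (2 : ℕ) • x = S3.inf := by
  rw [two_nsmul]
  revert hx; cases x <;> decide

lemma add_ne_zero_eq_inf (x y : S3) (hx : x ≠ 0) (hy : y ≠ 0) : x + y = S3.inf := by
  revert hx hy; cases x <;> cases y <;> decide

end S3

/-- The semigroup `S = {0, 1, ∞}` (with `1 + 1 = ∞` and `0 < 1 < ∞`) is a simple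
Cu-semigroup with largest element `∞`, satisfying ω-comparison but failing β-comparison:
`β(1,1) = 0` while `1 ≠ ∞`. -/
theorem stmt14 :
    S3.one + S3.one = S3.inf ∧
    (∀ s : S3, s ≤ S3.inf) ∧
    CuSemigroup S3 ∧
    CuSimple S3 ∧
    OmegaComparison S3 ∧
    beta S3.one S3.one = 0 ∧
    S3.one ≠ S3.inf := by
  have hpos : ∀ x : S3, 0 ≤ x := by intro x; cases x <;> decide
  refine ⟨rfl, S3.le_inf', ?_, ?_, ?_, ?_, by decide⟩
  · refine ⟨hpos, ?_, ?_, ?_, ?_⟩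
    · intro c _
      obtain ⟨n, hn⟩ := S3.exists_max c
      refine ⟨c n, ⟨fun x hx => ?_, fun x hx => hx ⟨n, rfl⟩⟩⟩
      obtain ⟨m, rfl⟩ := hx; exact hn m
    · intro a
      refine ⟨fun _ => a, fun n => (S3.wayBelow_iff a a).mpr le_rfl, ?_⟩
      rw [Set.range_const]; exact isLUB_singleton
    · intro a' a b' b ha hb
      rw [S3.wayBelow_iff] at *
      exact add_le_add ha hb
    · intro c d hc hd s t hs ht
      obtain ⟨n, hn⟩ := S3.exists_max c
      obtain ⟨m, hm⟩ := S3.exists_max d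
      have hsn : s = c (max n m) := le_antisymm
        (hs.2 (fun x hx => by obtain ⟨k, rfl⟩ := hx; exact (hn k).trans (hc (le_max_left n m))))
        (hs.1 ⟨max n m, rfl⟩)
      have htm : t = d (max n m) := le_antisymm
        (ht.2 (fun x hx => by obtain ⟨k, rfl⟩ := hx; exact (hm k).trans (hd (le_max_right n m))))
        (ht.1 ⟨max n m, rfl⟩)
      constructor
      · intro x hx
        obtain ⟨k, rfl⟩ := hx
        rw [hsn, htm]
        exact add_le_add ((hn k).trans (hc (le_max_left n m)))
          ((hm k).trans (hd (le_max_right n m)))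
      · intro x hx
        rw [hsn, htm]
        exact hx ⟨max n m, rfl⟩
  · intro x y hx _ y' hy'
    refine ⟨2, ?_⟩
    rw [S3.two_nsmul_ne_zero x hx]
    exact S3.le_inf' y'
  · intro x' x y hwb hy
    rw [S3.wayBelow_iff] at hwb
    by_cases hx : x = 0
    · exact ⟨0, by simpa [hx] using hwb⟩
    · have hynz : ∀ j, y j ≠ 0 := by
        intro j hj
        obtain ⟨k, hk1, hk⟩ := hy j
        rw [hj, smul_zero] at hk
        have hxk : x ≤ (k + 1) • x := by
          rw [succ_nsmul]
          exact le_add_of_nonneg_left (hpos _)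
        exact hx (le_antisymm (hxk.trans hk) (hpos x))
      refine ⟨2, ?_⟩
      rw [Finset.sum_range_succ, Finset.sum_range_one,
        S3.add_ne_zero_eq_inf _ _ (hynz 0) (hynz 1)]
      exact S3.le_inf' x'
  · have hmem : ∀ k : ℕ, 0 < k → ((2 : ℝ) / k) ∈
        {r : ℝ | ∃ k l : ℕ, 0 < k ∧ k • S3.one ≤ l • S3.one ∧ r = (l : ℝ) / (k : ℝ)} := by
      intro k hk
      refine ⟨k, 2, hk, ?_, by norm_num⟩
      rw [S3.two_nsmul_ne_zero S3.one (by decide)]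
      exact S3.le_inf' _
    have hbdd : BddBelow {r : ℝ | ∃ k l : ℕ, 0 < k ∧ k • S3.one ≤ l • S3.one ∧ r = (l : ℝ) / (k : ℝ)} := by
      refine ⟨0, fun r hr => ?_⟩
      obtain ⟨k, l, hk, _, rfl⟩ := hr
      positivity
    unfold beta
    set A := {r : ℝ | ∃ k l : ℕ, 0 < k ∧ k • S3.one ≤ l • S3.one ∧ r = (l : ℝ) / (k : ℝ)} with hA
    have hge : 0 ≤ sInf A := le_csInf ⟨_, hmem 1 one_pos⟩ (by
      rintro r ⟨k, l, hk, _, rfl⟩; positivity)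
    refine le_antisymm ?_ hge
    by_contra h
    push_neg at h
    obtain ⟨k, hk⟩ := exists_nat_gt (2 / sInf A)
    have hk0 : 0 < k := by
      have h2 : (0:ℝ) < 2 / sInf A := by positivity
      exact_mod_cast h2.trans hk
    have hle := csInf_le hbdd (hmem k hk0)
    have : (2:ℝ) / k < sInf A := by
      rw [div_lt_iff₀ (by exact_mod_cast hk0)]
      rw [div_lt_iff₀ h] at hk
      linarith
    linarith
end

section
/- Let S be a simple Cu-semigroup with β-comparison. Then S is either stably finite or purely infinite (S = {0, ∞}). That is, if there exists x ≪ ∞ that is infinite, then every nonzero element of S equals ∞. -/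
open scoped ENNReal

private lemma wb_mono' {S : Type*} [Preorder S] {a b b' : S}
    (h : CuWayBelow a b) (hbb : b ≤ b') : CuWayBelow a b' :=
  fun c hc s hs hb's => h c hc s hs (hbb.trans hb's)

/-- A simple Cu-semigroup with β-comparison is stably finite or purely infinite:
if some `x ≪ ∞` is infinite, then every nonzero element equals `∞`. -/
theorem stmt16 {S : Type*} [AddCommMonoid S] [PartialOrder S] [IsOrderedAddMonoid S] (hCu : CuSemigroup S)
    (hsimple : CuSimple S) (infty : S) (htop : ∀ s : S, s ≤ infty)
    (hβ : BetaComparison S) :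
    (∀ a : S, CuWayBelow a infty → ∀ b : S, a + b ≤ a → b = 0) ∨
      (∀ a : S, a = 0 ∨ a = infty) := by
  by_cases hne : infty = 0
  · right; intro a; left
    exact le_antisymm (hne ▸ htop a) (hCu.pos a)
  by_cases hfin : ∀ a : S, CuWayBelow a infty → ∀ b : S, a + b ≤ a → b = 0
  · exact Or.inl hfin
  right
  push_neg at hfin
  obtain ⟨a, ha, b, hab, hb⟩ := hfin
  have hnb : ∀ n : ℕ, a + n • b ≤ a := by
    intro n
    induction n with
    | zero => simp
    | succ n ih =>
      calc a + (n + 1) • b = (a + n • b) + b := by rw [succ_nsmul, add_assoc]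
        _ ≤ a + b := add_le_add_left ih b
        _ ≤ a := hab
  have hnb' : ∀ n : ℕ, n • b ≤ a := fun n =>
    le_trans (by simpa using add_le_add_left (hCu.pos a) (n • b)) (hnb n)
  obtain ⟨c, hc1, hc2⟩ := hCu.O2 infty
  have hca : ∀ n, c n ≤ a := by
    intro n
    obtain ⟨m, hm⟩ := hsimple b infty hb hne (c n) (wb_mono' (hc1 n) (htop _))
    exact hm.trans (hnb' m)
  have hainf : a = infty :=
    le_antisymm (htop a) (hc2.2 (by rintro _ ⟨n, rfl⟩; exact hca n))
  have winf : CuWayBelow infty infty := hainf ▸ ha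
  intro z
  by_cases hz : z = 0
  · exact Or.inl hz
  right
  obtain ⟨n, hn⟩ := hsimple z infty hz hne infty winf
  set T := {r : ℝ | ∃ k l : ℕ, 0 < k ∧ k • infty ≤ l • z ∧ r = (l : ℝ) / (k : ℝ)} with hT
  have hbdd : BddBelow T := by
    refine ⟨0, ?_⟩
    rintro r ⟨k, l, hk, _, rfl⟩
    positivity
  have hmem : ∀ k : ℕ, 0 < k → ((n : ℝ) / (k : ℝ)) ∈ T := fun k hk =>
    ⟨k, n, hk, le_trans (htop _) hn, rfl⟩
  have hβ0 : beta infty z = 0 := by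
    rw [beta, ← hT]
    apply le_antisymm
    · by_contra hlt
      push_neg at hlt
      have hpos : 0 < sInf T := hlt
      obtain ⟨k, hk⟩ := exists_nat_gt ((n : ℝ) / sInf T)
      have hk0 : 0 < k := by
        have : (0 : ℝ) < k := lt_of_le_of_lt (by positivity) hk
        exact_mod_cast this
      have h1 : sInf T ≤ (n : ℝ) / (k : ℝ) := csInf_le hbdd (hmem k hk0)
      have h2 : (n : ℝ) / (k : ℝ) < sInf T := by
        rw [div_lt_iff₀ (by exact_mod_cast hk0)]
        have := (div_lt_iff₀ hpos).mp hk
        linarith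
      exact absurd (h1.trans_lt h2) (lt_irrefl _)
    · exact le_csInf ⟨_, hmem 1 one_pos⟩ (by rintro r ⟨k, l, hk, _, rfl⟩; positivity)
  exact le_antisymm (htop z) (hβ infty z ⟨n, hn⟩ hβ0)
end

section
/- Let S be a simple Cu-semigroup with property (QQ). Then S has the corona factorization property, in the formulation: whenever (yₙ) is a sequence in S with yₙ ≪ ∞ and m·Σ_{n≥k} yₙ = ∞ for some fixed m ≥ 1 and all k, then Σ_{n≥1} yₙ = ∞. -/
open scoped ENNReal

/-- In a simple Cu-semigroup, property (QQ) implies the corona factorization property. -/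
theorem stmt18 {S : Type*} [AddCommMonoid S] [PartialOrder S] [IsOrderedAddMonoid S] (hCu : CuSemigroup S)
    (hsimple : CuSimple S) (infty : S) (htop : ∀ s : S, s ≤ infty)
    (hQQ : ∀ z : S, (∃ m : ℕ, 1 ≤ m ∧ 2 • (m • z) ≤ m • z) → 2 • z ≤ z)
    (y : ℕ → S) (hy : ∀ n : ℕ, CuWayBelow (y n) infty) (m : ℕ) (hm : 1 ≤ m)
    (hsum : ∀ k : ℕ, ∀ s : S,
      IsLUB (Set.range fun N => ∑ n ∈ Finset.Ico k N, y n) s → m • s = infty) :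
    ∀ s : S, IsLUB (Set.range fun N => ∑ n ∈ Finset.range N, y n) s → s = infty := by
  intro s hs
  by_cases hinf0 : infty = 0
  · exact le_antisymm (htop s) (hinf0 ▸ hCu.pos s)
  have hms : m • s = infty := by
    apply hsum 0 s
    have : (fun N => ∑ n ∈ Finset.Ico 0 N, y n) = fun N => ∑ n ∈ Finset.range N, y n := by
      funext N; rw [Finset.range_eq_Ico]
    rw [this]; exact hs
  have h2 : 2 • s ≤ s := hQQ s ⟨m, hm, by rw [hms]; exact htop _⟩
  have hns : ∀ n : ℕ, n • s ≤ s := by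
    intro n
    induction n with
    | zero => simpa using hCu.pos s
    | succ k ih =>
      calc (k + 1) • s = k • s + s := succ_nsmul s k
        _ ≤ s + s := add_le_add_left ih s
        _ = 2 • s := (two_nsmul s).symm
        _ ≤ s := h2
  by_cases hs0 : s = 0
  · exact absurd (by rw [← hms, hs0, smul_zero]) hinf0
  obtain ⟨c, hc, hlub⟩ := hCu.O2 infty
  have hles : ∀ n, c n ≤ s := by
    intro n
    have hwb : CuWayBelow (c n) infty := by
      intro d hd t ht hle
      exact hc n d hd t ht (le_trans (htop _) hle)
    obtain ⟨k, hk⟩ := hsimple s infty hs0 hinf0 (c n) hwb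
    exact hk.trans (hns k)
  have hle : infty ≤ s := hlub.2 (by rintro _ ⟨n, rfl⟩; exact hles n)
  exact le_antisymm (htop s) hle
end
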